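/- For n ≥ 4 and α ∈ {0,1}, every matrix in C_n^{α,1} is primitive; consequently |PSC_n^{α,1}| = 2^{n−2}. -/

import Mathlib

def IsPrimitive {n : ℕ} (A : Matrix (Fin n) (Fin n) ℝ) : Prop :=
  (∀ i j, 0 ≤ A i j) ∧ ∃ k : ℕ, 0 < k ∧ ∀ i j, 0 < (A ^ k) i j

def ExpIs {n : ℕ} (A : Matrix (Fin n) (Fin n) ℝ) (e : ℕ) : Prop :=
  IsLeast {k : ℕ | 0 < k ∧ ∀ i j, 0 < (A ^ k) i j} e

/-- A `(0,1)` companion matrix: superdiagonal entries `1` and all other entries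
`0` in the first `n-1` rows; last-row entries in `{0,1}`. -/
def IsCompanion {n : ℕ} (C : Matrix (Fin n) (Fin n) ℝ) : Prop :=
  ∀ i j : Fin n,
    if (i : ℕ) + 1 < n then (C i j = if (j : ℕ) = (i : ℕ) + 1 then 1 else 0)
    else (C i j = 0 ∨ C i j = 1)

/-- The set `C_n^{α,ε}` of symmetric companion matrices `C + Cᵀ` with
`c_{n,1} = α` and `c_{n,n} = ε`. -/
def companionClass (n : ℕ) (hn : 0 < n) (α ε : ℝ) :
    Set (Matrix (Fin n) (Fin n) ℝ) :=
  {A | ∃ C : Matrix (Fin n) (Fin n) ℝ, IsCompanion C ∧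
    C ⟨n - 1, by omega⟩ ⟨0, hn⟩ = α ∧ C ⟨n - 1, by omega⟩ ⟨n - 1, by omega⟩ = ε ∧
    A = C + C.transpose}

/-- `mRun S` : the maximum length of a run of consecutive integers contained in
`S` (`0` for the empty set). -/
noncomputable def mRun (S : Set ℕ) : ℕ := sSup {L : ℕ | ∃ a : ℕ, ∀ t, t < L → a + t ∈ S}

/-- The exponent set of a family of matrices. -/
def expSet {n : ℕ} (X : Set (Matrix (Fin n) (Fin n) ℝ)) : Set ℕ :=
  {e | ∃ A ∈ X, IsPrimitive A ∧ ExpIs A e}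

section Aux

lemma pow_entry_nonneg {n : ℕ} {A : Matrix (Fin n) (Fin n) ℝ}
    (hA : ∀ i j, 0 ≤ A i j) : ∀ (k : ℕ) (i j), 0 ≤ (A ^ k) i j := by
  intro k
  induction k with
  | zero =>
    intro i j
    simp only [pow_zero, Matrix.one_apply]
    split <;> norm_num
  | succ k ih =>
    intro i j
    rw [pow_succ, Matrix.mul_apply]
    exact Finset.sum_nonneg fun m _ => mul_nonneg (ih i m) (hA m j)

lemma pow_entry_pos_comp {n : ℕ} {A : Matrix (Fin n) (Fin n) ℝ}
    (hA : ∀ i j, 0 ≤ A i j) {a b : ℕ} {i l j : Fin n}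
    (h1 : 0 < (A ^ a) i l) (h2 : 0 < (A ^ b) l j) :
    0 < (A ^ (a + b)) i j := by
  rw [pow_add, Matrix.mul_apply]
  refine Finset.sum_pos'
    (fun m _ => mul_nonneg (pow_entry_nonneg hA a i m) (pow_entry_nonneg hA b m j))
    ⟨l, Finset.mem_univ l, mul_pos h1 h2⟩

lemma companion_nonneg {n : ℕ} {C : Matrix (Fin n) (Fin n) ℝ}
    (hC : IsCompanion C) : ∀ i j, 0 ≤ C i j := by
  intro i j
  have h := hC i j
  split at h
  · rw [h]; split <;> norm_num
  · rcases h with h | h <;> rw [h] <;> norm_num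

lemma primitive_of_class {n : ℕ} (hn : 4 ≤ n) {A C : Matrix (Fin n) (Fin n) ℝ}
    (hC : IsCompanion C)
    (hε : C ⟨n - 1, by omega⟩ ⟨n - 1, by omega⟩ = 1)
    (hAC : A = C + C.transpose) : IsPrimitive A := by
  have hCn := companion_nonneg hC
  have hnonneg : ∀ i j, 0 ≤ A i j := by
    intro i j
    rw [hAC]
    simp only [Matrix.add_apply, Matrix.transpose_apply]
    exact add_nonneg (hCn i j) (hCn j i)
  have hsup : ∀ (i : Fin n) (h : (i : ℕ) + 1 < n), 0 < A i ⟨(i : ℕ) + 1, h⟩ := by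
    intro i h
    have hc := hC i ⟨(i : ℕ) + 1, h⟩
    rw [if_pos h] at hc
    norm_num at hc
    rw [hAC]
    simp only [Matrix.add_apply, Matrix.transpose_apply, hc]
    have := hCn ⟨(i : ℕ) + 1, h⟩ i
    linarith
  have hsymm : ∀ d : ℕ, ((A ^ d)).transpose = A ^ d := by
    intro d
    rw [Matrix.transpose_pow]
    congr 1
    rw [hAC, Matrix.transpose_add, Matrix.transpose_transpose, add_comm]
  have hloop1 : 0 < A ⟨n - 1, by omega⟩ ⟨n - 1, by omega⟩ := by
    rw [hAC]
    simp only [Matrix.add_apply, Matrix.transpose_apply, hε]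
    norm_num
  have hup : ∀ (d : ℕ) (i : Fin n), (i : ℕ) + d = n - 1 →
      0 < (A ^ d) i ⟨n - 1, by omega⟩ := by
    intro d
    induction d with
    | zero =>
      intro i hi
      have heq : i = ⟨n - 1, by omega⟩ := Fin.ext (by simp; omega)
      rw [pow_zero, Matrix.one_apply, if_pos heq]
      norm_num
    | succ d ih =>
      intro i hi
      have h1 : (i : ℕ) + 1 < n := by omega
      have := pow_entry_pos_comp hnonneg (a := 1) (b := d)
        (i := i) (l := ⟨(i : ℕ) + 1, h1⟩)
        (by simpa using hsup i h1) (ih ⟨(i : ℕ) + 1, h1⟩ (by simp; omega))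
      simpa [Nat.add_comm] using this
  have hdown : ∀ (d : ℕ) (j : Fin n), (j : ℕ) + d = n - 1 →
      0 < (A ^ d) ⟨n - 1, by omega⟩ j := by
    intro d j hj
    have := hup d j hj
    rwa [← hsymm d, Matrix.transpose_apply] at this
  have hloop : ∀ m : ℕ, 0 < (A ^ m) ⟨n - 1, by omega⟩ ⟨n - 1, by omega⟩ := by
    intro m
    induction m with
    | zero => simp [Matrix.one_apply]
    | succ m ih =>
      exact pow_entry_pos_comp hnonneg (a := m) (b := 1) ih (by simpa using hloop1)
  refine ⟨hnonneg, 2 * (n - 1), by omega, ?_⟩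
  intro i j
  have hi := i.isLt
  have hj := j.isLt
  have hk : 2 * (n - 1) = (n - 1 - (i : ℕ)) + (((i : ℕ) + (j : ℕ)) + (n - 1 - (j : ℕ))) := by
    omega
  rw [hk]
  exact pow_entry_pos_comp hnonneg (hup _ i (by omega))
    (pow_entry_pos_comp hnonneg (hloop _) (hdown _ j (by omega)))

end Aux

section Count

/-- Companion matrix built from a last row `r`. -/
def Cmat (n : ℕ) (r : Fin n → ℝ) : Matrix (Fin n) (Fin n) ℝ :=
  Matrix.of fun i j =>
    if (i : ℕ) + 1 < n then (if (j : ℕ) = (i : ℕ) + 1 then 1 else 0) else r j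

/-- Last row determined by `α`, a bit vector for the middle entries, and `ε = 1`. -/
def rOf (n : ℕ) (α : ℝ) (b : Fin (n - 2) → Bool) : Fin n → ℝ :=
  fun j =>
    if h0 : (j : ℕ) = 0 then α
    else if hj : (j : ℕ) < n - 1 then
      (if b ⟨(j : ℕ) - 1, by omega⟩ then 1 else 0)
    else 1

def Fmap (n : ℕ) (α : ℝ) (b : Fin (n - 2) → Bool) : Matrix (Fin n) (Fin n) ℝ :=
  Cmat n (rOf n α b) + (Cmat n (rOf n α b)).transpose

lemma Cmat_apply (n : ℕ) (r : Fin n → ℝ) (i j : Fin n) :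
    Cmat n r i j =
      if (i : ℕ) + 1 < n then (if (j : ℕ) = (i : ℕ) + 1 then 1 else 0) else r j := rfl

lemma rOf_zero {n : ℕ} (α : ℝ) (b : Fin (n - 2) → Bool) {j : Fin n}
    (h : (j : ℕ) = 0) : rOf n α b j = α := by
  simp only [rOf]
  rw [dif_pos h]

lemma rOf_mid {n : ℕ} (α : ℝ) (b : Fin (n - 2) → Bool) {j : Fin n}
    (h0 : (j : ℕ) ≠ 0) (h1 : (j : ℕ) < n - 1) :
    rOf n α b j = if b ⟨(j : ℕ) - 1, by omega⟩ then 1 else 0 := by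
  simp only [rOf]
  rw [dif_neg h0, dif_pos h1]

lemma rOf_last {n : ℕ} (α : ℝ) (b : Fin (n - 2) → Bool) {j : Fin n}
    (h0 : (j : ℕ) ≠ 0) (h1 : ¬ (j : ℕ) < n - 1) : rOf n α b j = 1 := by
  simp only [rOf]
  rw [dif_neg h0, dif_neg h1]

lemma Fmap_entry {n : ℕ} (hn : 4 ≤ n) (α : ℝ) (b : Fin (n - 2) → Bool)
    (t : Fin (n - 2)) :
    Fmap n α b ⟨n - 1, by omega⟩ ⟨(t : ℕ) + 1, by have := t.isLt; omega⟩ =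
      (if b t then 1 else 0) +
        (if (n - 1 : ℕ) = (t : ℕ) + 1 + 1 then 1 else 0) := by
  have ht := t.isLt
  have e1 : Cmat n (rOf n α b) ⟨n - 1, by omega⟩ ⟨(t : ℕ) + 1, by omega⟩ =
      if b t then 1 else 0 := by
    rw [Cmat_apply, if_neg (by simp; omega)]
    rw [rOf_mid α b (by simp) (by simp; omega)]
    have hT : (⟨((⟨(t : ℕ) + 1, by omega⟩ : Fin n) : ℕ) - 1, by first | (simp; omega) | simp | omega⟩ : Fin (n - 2)) = t :=
      Fin.ext (by simp)
    rw [hT]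
  have e2 : Cmat n (rOf n α b) ⟨(t : ℕ) + 1, by omega⟩ ⟨n - 1, by omega⟩ =
      if (n - 1 : ℕ) = (t : ℕ) + 1 + 1 then 1 else 0 := by
    rw [Cmat_apply, if_pos (by simp; omega)]
  show Cmat n (rOf n α b) _ _ + Cmat n (rOf n α b) _ _ = _
  rw [e1, e2]

lemma Fmap_injective {n : ℕ} (hn : 4 ≤ n) (α : ℝ) :
    Function.Injective (Fmap n α) := by
  intro b b' hbb
  funext t
  have ht := t.isLt
  have h := congrFun (congrFun hbb ⟨n - 1, by omega⟩) ⟨(t : ℕ) + 1, by omega⟩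
  rw [Fmap_entry hn α b t, Fmap_entry hn α b' t] at h
  have h2 : (if b t then (1:ℝ) else 0) = if b' t then 1 else 0 := add_right_cancel h
  cases hb : b t <;> cases hb' : b' t <;> rw [hb, hb'] at h2 <;> first | rfl | norm_num at h2

lemma rOf_mem {n : ℕ} {α : ℝ} (hα : α = 0 ∨ α = 1) (b : Fin (n - 2) → Bool)
    (j : Fin n) : rOf n α b j = 0 ∨ rOf n α b j = 1 := by
  by_cases h0 : (j : ℕ) = 0
  · rw [rOf_zero α b h0]; exact hα
  · by_cases h1 : (j : ℕ) < n - 1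
    · rw [rOf_mid α b h0 h1]
      cases b ⟨(j : ℕ) - 1, by omega⟩
      · left; rw [if_neg (by simp)]
      · right; rw [if_pos rfl]
    · rw [rOf_last α b h0 h1]; right; rfl

lemma class_eq_range {n : ℕ} (hn : 4 ≤ n) (h0 : 0 < n) (α : ℝ) (hα : α = 0 ∨ α = 1) :
    companionClass n h0 α 1 = Set.range (Fmap n α) := by
  ext A
  constructor
  · rintro ⟨C, hC, hα0, hε, rfl⟩
    classical
    refine ⟨fun t => if C ⟨n - 1, by omega⟩ ⟨(t : ℕ) + 1, by have := t.isLt; omega⟩ = 1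
      then true else false, ?_⟩
    set b : Fin (n - 2) → Bool := fun t =>
      if C ⟨n - 1, by omega⟩ ⟨(t : ℕ) + 1, by have := t.isLt; omega⟩ = 1 then true else false
      with hbdef
    have hCeq : Cmat n (rOf n α b) = C := by
      funext i j
      rw [Cmat_apply]
      by_cases hi : (i : ℕ) + 1 < n
      · rw [if_pos hi]
        have h' := hC i j
        rw [if_pos hi] at h'
        exact h'.symm
      · rw [if_neg hi]
        have hival : (i : ℕ) = n - 1 := by have := i.isLt; omega
        have hieq : i = ⟨n - 1, by omega⟩ := Fin.ext (by simpa using hival)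
        rw [hieq]
        by_cases hj0 : (j : ℕ) = 0
        · rw [rOf_zero α b hj0]
          have hjeq : j = ⟨0, by omega⟩ := Fin.ext (by simpa using hj0)
          rw [hjeq]
          exact hα0.symm
        · by_cases hjn : (j : ℕ) < n - 1
          · rw [rOf_mid α b hj0 hjn]
            have hjeq : (⟨((j : ℕ) - 1 : ℕ) + 1, by omega⟩ : Fin n) = j :=
              Fin.ext (by simp; omega)
            have hbv : b ⟨(j : ℕ) - 1, by omega⟩ =
                if C ⟨n - 1, by omega⟩ j = 1 then true else false := by
              rw [hbdef]
              simp only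
              congr 1
              rw [hjeq]
            rw [hbv]
            have hCj := hC ⟨n - 1, by omega⟩ j
            rw [if_neg (by simp; omega)] at hCj
            rcases hCj with h' | h' <;> rw [h'] <;> norm_num
          · rw [rOf_last α b hj0 hjn]
            have hjeq : j = ⟨n - 1, by omega⟩ :=
              Fin.ext (by have := j.isLt; simpa using (by omega : (j : ℕ) = n - 1))
            rw [hjeq]
            exact hε.symm
    rw [Fmap, hCeq]
  · rintro ⟨b, rfl⟩
    refine ⟨Cmat n (rOf n α b), ?_, ?_, ?_, rfl⟩
    · intro i j
      by_cases hi : (i : ℕ) + 1 < n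
      · rw [if_pos hi, Cmat_apply, if_pos hi]
      · rw [if_neg hi]
        have hval : Cmat n (rOf n α b) i j = rOf n α b j := by
          rw [Cmat_apply, if_neg hi]
        rw [hval]
        exact rOf_mem hα b j
    · have hval : Cmat n (rOf n α b) ⟨n - 1, by omega⟩ ⟨0, by omega⟩ =
          rOf n α b ⟨0, by omega⟩ := by
        rw [Cmat_apply, if_neg (by simp; omega)]
      rw [hval, rOf_zero α b (by simp)]
    · have hval : Cmat n (rOf n α b) ⟨n - 1, by omega⟩ ⟨n - 1, by omega⟩ =
          rOf n α b ⟨n - 1, by omega⟩ := by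
        rw [Cmat_apply, if_neg (by simp; omega)]
      rw [hval, rOf_last α b (by simp; omega) (by simp)]

end Count

/-- For `n ≥ 4` and `α ∈ {0,1}`, every matrix in `C_n^{α,1}` is primitive and
`|PSC_n^{α,1}| = 2^(n-2)`. -/
theorem card_PSC_alpha_one {n : ℕ} (hn : 4 ≤ n) (α : ℝ) (hα : α = 0 ∨ α = 1) :
    (∀ A ∈ companionClass n (by omega) α 1, IsPrimitive A) ∧
      Set.ncard {A ∈ companionClass n (by omega) α 1 | IsPrimitive A} =
        2 ^ (n - 2) := by
  have hprim : ∀ A ∈ companionClass n (by omega) α 1, IsPrimitive A := by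
    rintro A ⟨C, hC, hα0, hε, hAC⟩
    exact primitive_of_class hn hC hε hAC
  refine ⟨hprim, ?_⟩
  have hsep : {A ∈ companionClass n (by omega) α 1 | IsPrimitive A} =
      companionClass n (by omega) α 1 := by
    ext A
    exact ⟨fun h => h.1, fun h => ⟨h, hprim A h⟩⟩
  rw [hsep, class_eq_range hn (by omega) α hα, ← Set.image_univ,
    Set.ncard_image_of_injective _ (Fmap_injective hn α), Set.ncard_univ]
  simp [Nat.card_eq_fintype_card]
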